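/- arXiv:math/9902142 — 2 statements merged into one kernel-verified Lean document; each statement's English description precedes it below -/
import Mathlib

section
/- Let L₁, L₂ be a Fredholm pair of closed subspaces of a Hilbert space H (i.e., dim(L₁ ∩ L₂) < ∞ and L₁ + L₂ is closed of finite codimension). If L₂' ⊆ L₂ is a closed subspace of finite codimension in L₂, then (L₁, L₂') is also a Fredholm pair. -/
open Submodule

section Aux

/-- A vector space with finite-dimensional submodule and quotient is finite dimensional. -/
lemma auxFD_of_submodule_quotient {V : Type*} [AddCommGroup V] [Module ℝ V]
    (W : Submodule ℝ V) [FiniteDimensional ℝ W] [FiniteDimensional ℝ (V ⧸ W)] :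
    FiniteDimensional ℝ V := by
  obtain ⟨C, hC⟩ := W.exists_isCompl
  haveI : FiniteDimensional ℝ C := (W.quotientEquivOfIsCompl C hC).finiteDimensional
  exact Module.Finite.equiv (W.prodEquivOfIsCompl C hC)

/-- Sum of a closed subspace and a finite-dimensional subspace is closed. -/
lemma auxIsClosed_sup_finiteDimensional {E : Type*} [NormedAddCommGroup E] [NormedSpace ℝ E]
    (W F : Submodule ℝ E) (hW : IsClosed (W : Set E)) [FiniteDimensional ℝ F] :
    IsClosed ((W ⊔ F : Submodule ℝ E) : Set E) := by
  haveI : IsClosed (W : Set E) := hW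
  have hcont : Continuous W.mkQ := by
    refine AddMonoidHomClass.continuous_of_bound W.mkQ 1 fun x => ?_
    simpa using Submodule.Quotient.norm_mk_le W x
  haveI : FiniteDimensional ℝ (F.map W.mkQ) := inferInstance
  have hclosed : IsClosed ((F.map W.mkQ : Submodule ℝ (E ⧸ W)) : Set (E ⧸ W)) :=
    Submodule.closed_of_finiteDimensional _
  have h : (W ⊔ F : Submodule ℝ E) = (F.map W.mkQ).comap W.mkQ := by
    rw [comap_map_eq, ker_mkQ, sup_comm]
  rw [h]
  exact hclosed.preimage hcont

/-- Image of a closed saturated submodule under a surjective CLM between Banach spaces. -/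
lemma auxIsClosed_image {E F : Type*} [NormedAddCommGroup E] [NormedSpace ℝ E] [CompleteSpace E]
    [NormedAddCommGroup F] [NormedSpace ℝ F] [CompleteSpace F]
    (f : E →L[ℝ] F) (hsurj : Function.Surjective f) (S : Submodule ℝ E)
    (hS : IsClosed (S : Set E)) (hker : LinearMap.ker (f : E →ₗ[ℝ] F) ≤ S) : IsClosed (f '' S) := by
  have hopen : IsOpenMap f := f.isOpenMap hsurj
  have heq : f '' (S : Set E) = (f '' ((S : Set E)ᶜ))ᶜ := by
    ext y
    constructor
    · rintro ⟨s, hs, rfl⟩ ⟨x, hx, hxs⟩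
      apply hx
      have : x - s ∈ LinearMap.ker (f : E →ₗ[ℝ] F) := by
        simp [LinearMap.mem_ker, map_sub, hxs]
      have hxS : x - s ∈ S := hker this
      simpa using S.add_mem hxS hs
    · intro hy
      obtain ⟨x, rfl⟩ := hsurj y
      by_cases hx : x ∈ S
      · exact ⟨x, hx, rfl⟩
      · exact absurd ⟨x, hx, rfl⟩ hy
  rw [heq]
  exact (hopen _ hS.isOpen_compl).isClosed_compl

lemma auxMap_eq_bot {M N : Type*} [AddCommGroup M] [Module ℝ M] [AddCommGroup N] [Module ℝ N]
    (f : M →ₗ[ℝ] N) (p : Submodule ℝ M) (h : p ≤ LinearMap.ker f) : p.map f = ⊥ := by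
  rw [eq_bot_iff]
  rintro y ⟨x, hx, rfl⟩
  simpa using h hx

end Aux

/-- A pair of closed subspaces of a Hilbert space is a Fredholm pair if its intersection is
finite dimensional and its sum is closed of finite codimension. -/
def FredholmPair {H : Type*} [NormedAddCommGroup H] [InnerProductSpace ℝ H]
    (A B : Submodule ℝ H) : Prop :=
  FiniteDimensional ℝ ↥(A ⊓ B) ∧ IsClosed ((A ⊔ B : Submodule ℝ H) : Set H) ∧
    FiniteDimensional ℝ (H ⧸ (A ⊔ B))

/-- If `(L₁, L₂)` is a Fredholm pair of closed subspaces and `L₂' ⊆ L₂` is closed of finite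
codimension in `L₂`, then `(L₁, L₂')` is also a Fredholm pair. -/
theorem fredholmPair_of_finite_codim_subspace
    {H : Type*} [NormedAddCommGroup H] [InnerProductSpace ℝ H] [CompleteSpace H]
    (L1 L2 L2' : Submodule ℝ H)
    (hL1 : IsClosed (L1 : Set H)) (hL2 : IsClosed (L2 : Set H))
    (hL2' : IsClosed ((L2' : Set H)))
    (hle : L2' ≤ L2)
    (hFred : FredholmPair L1 L2)
    (hcodim : FiniteDimensional ℝ (↥L2 ⧸ (L2'.comap L2.subtype))) :
    FredholmPair L1 L2' := by
  obtain ⟨hfin, hclosedT, hcodimT⟩ := hFred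
  haveI := hfin
  haveI := hcodimT
  haveI := hcodim
  refine ⟨?_, ?_, ?_⟩
  · exact Submodule.finiteDimensional_of_le (inf_le_inf_left L1 hle)
  · -- closedness of L1 ⊔ L2'
    haveI : IsClosed (L1 : Set H) := hL1
    -- mkQ as a continuous linear map
    have hcont : Continuous L1.mkQ := by
      refine AddMonoidHomClass.continuous_of_bound L1.mkQ 1 fun x => ?_
      simpa using Submodule.Quotient.norm_mk_le L1 x
    set π : H →L[ℝ] (H ⧸ L1) := ⟨L1.mkQ, hcont⟩ with hπ
    have hπsurj : Function.Surjective π := Submodule.mkQ_surjective L1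
    -- image of L2 in the quotient is closed
    have hTsat : LinearMap.ker ((π : H →L[ℝ] H ⧸ L1) : H →ₗ[ℝ] H ⧸ L1) ≤ L1 ⊔ L2 := by
      intro x hx
      have h0 : (Submodule.Quotient.mk x : H ⧸ L1) = 0 := hx
      exact Submodule.mem_sup_left ((Submodule.Quotient.mk_eq_zero L1).mp h0)
    have hFclosed : IsClosed ((L2.map L1.mkQ : Submodule ℝ (H ⧸ L1)) : Set (H ⧸ L1)) := by
      have himg : IsClosed (π '' ((L1 ⊔ L2 : Submodule ℝ H) : Set H)) :=
        auxIsClosed_image π hπsurj (L1 ⊔ L2) hclosedT hTsat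
      have hmapeq : (L1 ⊔ L2).map L1.mkQ = L2.map L1.mkQ := by
        rw [Submodule.map_sup]
        rw [Submodule.mkQ_map_self, bot_sup_eq]
      have : (π '' ((L1 ⊔ L2 : Submodule ℝ H) : Set H)) =
          ((L2.map L1.mkQ : Submodule ℝ (H ⧸ L1)) : Set (H ⧸ L1)) := by
        rw [← hmapeq]; rfl
      rwa [this] at himg
    set F : Submodule ℝ (H ⧸ L1) := L2.map L1.mkQ with hF
    haveI : CompleteSpace F := hFclosed.completeSpace_coe
    haveI : CompleteSpace L2 := hL2.completeSpace_coe
    -- continuous linear map from L2 onto F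
    set g : ↥L2 →L[ℝ] ↥F :=
      { toLinearMap := (L1.mkQ.comp L2.subtype).codRestrict F
          (fun x => Submodule.mem_map_of_mem x.2)
        cont := Continuous.subtype_mk (hcont.comp continuous_subtype_val) _ } with hg
    have hgsurj : Function.Surjective g := by
      rintro ⟨y, hy⟩
      obtain ⟨x, hx, rfl⟩ := hy
      exact ⟨⟨x, hx⟩, rfl⟩
    -- the saturated closed submodule S' of L2
    set S : Submodule ℝ H := L2' ⊔ (L1 ⊓ L2) with hS
    have hSclosed : IsClosed (S : Set H) := auxIsClosed_sup_finiteDimensional L2' (L1 ⊓ L2) hL2'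
    have hSle : S ≤ L2 := sup_le hle inf_le_right
    set S' : Submodule ℝ ↥L2 := S.comap L2.subtype with hS'
    have hS'closed : IsClosed (S' : Set ↥L2) := hSclosed.preimage continuous_subtype_val
    have hkerg : LinearMap.ker (g : ↥L2 →ₗ[ℝ] ↥F) ≤ S' := by
      intro x hx
      have hx0 : (Submodule.Quotient.mk (x : H) : H ⧸ L1) = 0 := congrArg Subtype.val hx
      exact Submodule.mem_sup_right ⟨(Submodule.Quotient.mk_eq_zero L1).mp hx0, x.2⟩
    have hgS : IsClosed (g '' S') := auxIsClosed_image g hgsurj S' hS'closed hkerg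
    have himage2 : IsClosed (Subtype.val '' (g '' (S' : Set ↥L2))) :=
      hFclosed.isClosedEmbedding_subtypeVal.isClosedMap _ hgS
    have hsetid : (Subtype.val '' (g '' (S' : Set ↥L2))) = L1.mkQ '' (S : Set H) := by
      ext y
      constructor
      · rintro ⟨-, ⟨x, hx, rfl⟩, rfl⟩
        exact ⟨(x : H), hx, rfl⟩
      · rintro ⟨x, hx, rfl⟩
        exact ⟨g ⟨x, hSle hx⟩, ⟨⟨x, hSle hx⟩, hx, rfl⟩, rfl⟩
    have hSmap : L1.mkQ '' (S : Set H) = ((L2'.map L1.mkQ : Submodule ℝ (H ⧸ L1)) : Set (H ⧸ L1)) := by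
      have : S.map L1.mkQ = L2'.map L1.mkQ := by
        rw [hS, Submodule.map_sup]
        rw [auxMap_eq_bot L1.mkQ (L1 ⊓ L2) (by rw [Submodule.ker_mkQ]; exact inf_le_left),
          sup_bot_eq]
      rw [← this]; rfl
    have hkey : IsClosed ((L2'.map L1.mkQ : Submodule ℝ (H ⧸ L1)) : Set (H ⧸ L1)) := by
      rw [← hSmap, ← hsetid]; exact himage2
    have hfinal : (L1 ⊔ L2' : Submodule ℝ H) = (L2'.map L1.mkQ).comap L1.mkQ := by
      rw [comap_map_eq, ker_mkQ, sup_comm]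
    rw [hfinal]
    exact hkey.preimage hcont
  · -- finite codimension
    set K : Submodule ℝ H := L1 ⊔ L2' with hK
    have hKT : K ≤ L1 ⊔ L2 := sup_le_sup_left hle L1
    haveI : FiniteDimensional ℝ ((H ⧸ K) ⧸ ((L1 ⊔ L2).map K.mkQ)) :=
      (Submodule.quotientQuotientEquivQuotient K (L1 ⊔ L2) hKT).symm.finiteDimensional
    haveI : FiniteDimensional ℝ ((L1 ⊔ L2).map K.mkQ) := by
      have h1 : (L1 ⊔ L2).map K.mkQ = L2.map K.mkQ := by
        rw [Submodule.map_sup]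
        rw [auxMap_eq_bot K.mkQ L1 (by rw [Submodule.ker_mkQ]; exact le_sup_left), bot_sup_eq]
      have h2 : L2.map K.mkQ = LinearMap.range (K.mkQ.comp L2.subtype) := by
        rw [LinearMap.range_comp, Submodule.range_subtype]
      set φ : ↥L2 →ₗ[ℝ] H ⧸ K := K.mkQ.comp L2.subtype with hφ
      have hφker : L2'.comap L2.subtype ≤ LinearMap.ker φ := by
        intro x hx
        have : (x : H) ∈ K := Submodule.mem_sup_right hx
        simpa [hφ, LinearMap.mem_ker, Submodule.Quotient.mk_eq_zero] using this
      have h3 : LinearMap.range φ =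
          LinearMap.range ((L2'.comap L2.subtype).liftQ φ hφker) := by
        conv_lhs => rw [← (L2'.comap L2.subtype).liftQ_mkQ φ hφker]
        rw [LinearMap.range_comp, Submodule.range_mkQ, Submodule.map_top]
      rw [h1, h2, h3]
      infer_instance
    exact auxFD_of_submodule_quotient ((L1 ⊔ L2).map K.mkQ)
end

section
/- Let H = V ⊕ W be an orthogonal decomposition of a Hilbert space and let k_r : V → W be a family of bounded operators depending on a real parameter r such that ‖k_r - k_0‖ → 0 as r → 0. Then the orthogonal projections P_r onto the graphs Γ(k_r) converge in operator norm to the orthogonal projection P_0 onto Γ(k_0) as r → 0. -/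
/-- The graph `Γ(k) = {v + k v : v ∈ V}` as a subspace of `H`. -/
noncomputable def graphSub {H : Type*} [NormedAddCommGroup H] [InnerProductSpace ℝ H]
    (V W : Submodule ℝ H) (k : V →L[ℝ] W) : Submodule ℝ H :=
  LinearMap.range (V.subtype + W.subtype.comp (k : V →ₗ[ℝ] W))

lemma mem_graphSub {H : Type*} [NormedAddCommGroup H] [InnerProductSpace ℝ H]
    {V W : Submodule ℝ H} {k : V →L[ℝ] W} {x : H} :
    x ∈ graphSub V W k ↔ ∃ v : V, (v : H) + (k v : H) = x := by
  simp [graphSub, LinearMap.mem_range]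

lemma le_of_sq_le_sq' {a b : ℝ} (ha : 0 ≤ a) (hb : 0 ≤ b) (h : a ^ 2 ≤ b ^ 2) : a ≤ b := by
  nlinarith

lemma pyth_aux {H : Type*} [NormedAddCommGroup H] [InnerProductSpace ℝ H]
    {a b : H} (h : inner ℝ a b = (0 : ℝ)) : ‖a + b‖ ^ 2 = ‖a‖ ^ 2 + ‖b‖ ^ 2 := by
  rw [norm_add_sq_real, h]; ring

section aux

variable {H : Type*} [NormedAddCommGroup H] [InnerProductSpace ℝ H]
    {V W : Submodule ℝ H} (horth : W ≤ Vᗮ)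

/-- projection contracts and residue contracts -/
lemma proj_norms {k : V →L[ℝ] W} {Q : H →L[ℝ] H}
    (hQ : ∀ x : H, Q x ∈ graphSub V W k ∧ x - Q x ∈ (graphSub V W k)ᗮ) (x : H) :
    ‖Q x‖ ≤ ‖x‖ ∧ ‖x - Q x‖ ≤ ‖x‖ := by
  have hin : inner ℝ (Q x) (x - Q x) = (0 : ℝ) :=
    Submodule.inner_right_of_mem_orthogonal (hQ x).1 (hQ x).2
  have h : ‖x‖ ^ 2 = ‖Q x‖ ^ 2 + ‖x - Q x‖ ^ 2 := by
    have := pyth_aux hin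
    rwa [add_sub_cancel] at this
  refine ⟨le_of_sq_le_sq' (norm_nonneg _) (norm_nonneg _) ?_,
    le_of_sq_le_sq' (norm_nonneg _) (norm_nonneg _) ?_⟩
  · nlinarith [sq_nonneg ‖x - Q x‖]
  · nlinarith [sq_nonneg ‖Q x‖]

/-- minimality of the orthogonal projection -/
lemma proj_min {k : V →L[ℝ] W} {Q : H →L[ℝ] H}
    (hQ : ∀ x : H, Q x ∈ graphSub V W k ∧ x - Q x ∈ (graphSub V W k)ᗮ)
    (x : H) {n : H} (hn : n ∈ graphSub V W k) : ‖x - Q x‖ ≤ ‖x - n‖ := by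
  have hmem : Q x - n ∈ graphSub V W k := Submodule.sub_mem _ (hQ x).1 hn
  have hin : inner ℝ (Q x - n) (x - Q x) = (0 : ℝ) :=
    Submodule.inner_right_of_mem_orthogonal hmem (hQ x).2
  have key : ‖x - n‖ ^ 2 = ‖x - Q x‖ ^ 2 + ‖Q x - n‖ ^ 2 := by
    have h := pyth_aux (a := x - Q x) (b := Q x - n)
      (by rw [real_inner_comm]; exact hin)
    have heq : x - Q x + (Q x - n) = x - n := by abel
    rwa [heq] at h
  apply le_of_sq_le_sq' (norm_nonneg _) (norm_nonneg _)
  nlinarith [sq_nonneg ‖Q x - n‖]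

include horth in
/-- points on one graph are close to the other graph -/
lemma graph_close {k₁ k₂ : V →L[ℝ] W} {Q : H →L[ℝ] H}
    (hQ : ∀ x : H, Q x ∈ graphSub V W k₂ ∧ x - Q x ∈ (graphSub V W k₂)ᗮ)
    {y : H} (hy : y ∈ graphSub V W k₁) : ‖y - Q y‖ ≤ ‖k₁ - k₂‖ * ‖y‖ := by
  obtain ⟨v, hv⟩ := mem_graphSub.mp hy
  have hn : ((v : H) + (k₂ v : H)) ∈ graphSub V W k₂ := mem_graphSub.mpr ⟨v, rfl⟩
  have h1 : ‖y - Q y‖ ≤ ‖y - ((v : H) + (k₂ v : H))‖ := proj_min hQ y hn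
  have h2 : y - ((v : H) + (k₂ v : H)) = (((k₁ - k₂) v : W) : H) := by
    rw [← hv, ContinuousLinearMap.sub_apply, Submodule.coe_sub]
    abel
  have h3 : ‖((k₁ - k₂) v : W)‖ ≤ ‖k₁ - k₂‖ * ‖v‖ := (k₁ - k₂).le_opNorm v
  have hvy : ‖(v : H)‖ ≤ ‖y‖ := by
    have hin : inner ℝ (v : H) ((k₁ v : W) : H) = (0 : ℝ) := (horth (k₁ v).2) _ v.2
    have hp := pyth_aux hin
    rw [hv] at hp
    apply le_of_sq_le_sq' (norm_nonneg _) (norm_nonneg _)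
    nlinarith [sq_nonneg ‖((k₁ v : W) : H)‖]
  calc ‖y - Q y‖ ≤ ‖(((k₁ - k₂) v : W) : H)‖ := by rwa [h2] at h1
    _ ≤ ‖k₁ - k₂‖ * ‖(v : H)‖ := by simpa using h3
    _ ≤ ‖k₁ - k₂‖ * ‖y‖ := by gcongr

/-- pointwise self-adjointness -/
lemma proj_selfadj {k : V →L[ℝ] W} {Q : H →L[ℝ] H}
    (hQ : ∀ x : H, Q x ∈ graphSub V W k ∧ x - Q x ∈ (graphSub V W k)ᗮ) (z : H) :
    inner ℝ z (Q z) = (‖Q z‖ : ℝ) ^ 2 := by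
  have hin : inner ℝ (Q z) (z - Q z) = (0 : ℝ) :=
    Submodule.inner_right_of_mem_orthogonal (hQ z).1 (hQ z).2
  have hsum : Q z + (z - Q z) = z := by abel
  calc (inner ℝ z (Q z) : ℝ) = inner ℝ (Q z + (z - Q z)) (Q z) := by rw [hsum]
    _ = (inner ℝ (Q z) (Q z) : ℝ) + inner ℝ (z - Q z) (Q z) := inner_add_left _ _ _
    _ = ‖Q z‖ ^ 2 := by
        rw [real_inner_self_eq_norm_sq, real_inner_comm, hin, add_zero]

end aux

/-- If `k_r : V → W` is a family of bounded operators with `‖k_r - k_0‖ → 0` as `r → 0`,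
then the orthogonal projections `P_r` onto the graphs `Γ(k_r)` converge in operator norm to
the orthogonal projection onto `Γ(k_0)`. -/
theorem graph_projections_tendsto_of_tendsto
    {H : Type*} [NormedAddCommGroup H] [InnerProductSpace ℝ H] [CompleteSpace H]
    (V W : Submodule ℝ H)
    (hV : IsClosed (V : Set H)) (hW : IsClosed (W : Set H))
    (horth : W ≤ Vᗮ) (hsup : V ⊔ W = ⊤)
    (k : ℝ → (V →L[ℝ] W))
    (hk : Filter.Tendsto (fun r => ‖k r - k 0‖) (nhds 0) (nhds 0))
    (P : ℝ → (H →L[ℝ] H))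
    (hP : ∀ r, ∀ x : H, P r x ∈ graphSub V W (k r) ∧ x - P r x ∈ (graphSub V W (k r))ᗮ) :
    Filter.Tendsto P (nhds 0) (nhds (P 0)) := by
  set e : ℝ → ℝ := fun r => ‖k r - k 0‖ with he
  have he0 : ∀ r, 0 ≤ e r := fun r => norm_nonneg (k r - k 0)
  -- key operator norm bound
  have bound : ∀ r, ‖P r - P 0‖ ≤ e r + Real.sqrt (e r) := by
    intro r
    apply ContinuousLinearMap.opNorm_le_bound _ (by positivity)
    intro x
    set z : H := x - P 0 x with hz
    -- estimate ‖P r z‖ ≤ √(e r) * ‖z‖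
    have hPrz : ‖P r z‖ ≤ Real.sqrt (e r) * ‖z‖ := by
      have h1 : inner ℝ z (P r z) = (‖P r z‖ : ℝ) ^ 2 := proj_selfadj (hP r) z
      have hz0 : z ∈ (graphSub V W (k 0))ᗮ := (hP 0 x).2
      have h2 : inner ℝ z (P 0 (P r z)) = (0 : ℝ) := by
        rw [real_inner_comm]
        exact hz0 _ (hP 0 (P r z)).1
      have h3 : (‖P r z‖ : ℝ) ^ 2 = inner ℝ z (P r z - P 0 (P r z)) := by
        rw [inner_sub_right, h2, sub_zero, h1]
      have h4 : ‖P r z - P 0 (P r z)‖ ≤ e r * ‖P r z‖ := by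
        have := graph_close horth (hP 0) (hP r z).1
        simpa [he] using this
      have h5 : ‖P r z‖ ≤ ‖z‖ := (proj_norms (hP r) z).1
      have h6 : (‖P r z‖ : ℝ) ^ 2 ≤ e r * ‖z‖ ^ 2 := by
        have hcs : (inner ℝ z (P r z - P 0 (P r z)) : ℝ)
            ≤ ‖z‖ * ‖P r z - P 0 (P r z)‖ := real_inner_le_norm _ _
        rw [h3]
        calc (inner ℝ z (P r z - P 0 (P r z)) : ℝ)
            ≤ ‖z‖ * ‖P r z - P 0 (P r z)‖ := hcs
          _ ≤ ‖z‖ * (e r * ‖z‖) := by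
              refine mul_le_mul_of_nonneg_left ?_ (norm_nonneg z)
              calc ‖P r z - P 0 (P r z)‖ ≤ e r * ‖P r z‖ := h4
                _ ≤ e r * ‖z‖ := mul_le_mul_of_nonneg_left h5 (he0 r)
          _ = e r * ‖z‖ ^ 2 := by ring
      have h7 : ‖P r z‖ = Real.sqrt (‖P r z‖ ^ 2) := by
        rw [Real.sqrt_sq (norm_nonneg _)]
      rw [h7]
      calc Real.sqrt (‖P r z‖ ^ 2) ≤ Real.sqrt (e r * ‖z‖ ^ 2) := Real.sqrt_le_sqrt h6
        _ = Real.sqrt (e r) * ‖z‖ := by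
            rw [Real.sqrt_mul (he0 r), Real.sqrt_sq (norm_nonneg _)]
    -- main decomposition
    have hdec : (P r - P 0) x = (P r (P 0 x) - P 0 x) + P r z := by
      simp only [ContinuousLinearMap.sub_apply, hz, map_sub]
      abel
    have h8 : ‖P r (P 0 x) - P 0 x‖ ≤ e r * ‖P 0 x‖ := by
      have hgc := graph_close horth (hP r) (hP 0 x).1
      calc ‖P r (P 0 x) - P 0 x‖ = ‖P 0 x - P r (P 0 x)‖ := norm_sub_rev _ _
        _ ≤ ‖k 0 - k r‖ * ‖P 0 x‖ := hgc
        _ = e r * ‖P 0 x‖ := by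
            have hee : ‖k 0 - k r‖ = e r := norm_sub_rev (k 0) (k r)
            rw [hee]
    have h9 : ‖P 0 x‖ ≤ ‖x‖ := (proj_norms (hP 0) x).1
    have h10 : ‖z‖ ≤ ‖x‖ := (proj_norms (hP 0) x).2
    calc ‖(P r - P 0) x‖ = ‖(P r (P 0 x) - P 0 x) + P r z‖ := by rw [hdec]
      _ ≤ ‖P r (P 0 x) - P 0 x‖ + ‖P r z‖ := norm_add_le _ _
      _ ≤ e r * ‖P 0 x‖ + Real.sqrt (e r) * ‖z‖ := add_le_add h8 hPrz
      _ ≤ e r * ‖x‖ + Real.sqrt (e r) * ‖x‖ :=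
          add_le_add (mul_le_mul_of_nonneg_left h9 (he0 r))
            (mul_le_mul_of_nonneg_left h10 (Real.sqrt_nonneg _))
      _ = (e r + Real.sqrt (e r)) * ‖x‖ := by ring
  -- conclude by squeezing
  rw [tendsto_iff_norm_sub_tendsto_zero]
  have hub : Filter.Tendsto (fun r => e r + Real.sqrt (e r)) (nhds 0) (nhds 0) := by
    have hsqrt : Filter.Tendsto (fun r => Real.sqrt (e r)) (nhds 0) (nhds 0) := by
      have := (Real.continuous_sqrt.tendsto 0).comp hk
      simpa [Function.comp_def] using this
    have := hk.add hsqrt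
    simpa using this
  exact squeeze_zero (fun r => norm_nonneg _) bound hub
end
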